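/- Let R = B/p^mB with B a PID and p prime, m ≥ 2, and let f ∈ R[x₁,…,xₙ] be nonzero. Then f can be written as f = c·f_red where c ∈ R is (the class of) the gcd of lifts of the coefficients of f and f_red has unit content (the gcd of the coefficients of f_red is a unit); moreover f_red is a nonzero divisor in R[x₁,…,xₙ]. -/

import Mathlib

open MvPolynomial

section Aux

variable {B : Type*} [CommRing B] [IsDomain B] [IsPrincipalIdealRing B]
  (p : B) (hp : Prime p) (m : ℕ) (hm : 2 ≤ m)

private lemma aux_le (hm : 2 ≤ m) : Ideal.span {p ^ m} ≤ Ideal.span ({p} : Set B) := by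
  rw [Ideal.span_le]
  simp only [Set.singleton_subset_iff, SetLike.mem_coe, Ideal.mem_span_singleton]
  exact dvd_pow_self p (by omega)

/-- the natural map `B/p^m → B/p` -/
noncomputable def auxφ (hm : 2 ≤ m) : (B ⧸ Ideal.span {p ^ m}) →+* (B ⧸ Ideal.span ({p} : Set B)) :=
  Ideal.Quotient.factor (aux_le p m hm)

lemma aux_unit_iff (hp : Prime p) (hm : 2 ≤ m) (x : B ⧸ Ideal.span {p ^ m}) :
    IsUnit x ↔ auxφ p m hm x ≠ 0 := by
  haveI : (Ideal.span ({p} : Set B)).IsPrime :=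
    (Ideal.span_singleton_prime hp.ne_zero).mpr hp
  obtain ⟨b, rfl⟩ := Ideal.Quotient.mk_surjective x
  have hφ : auxφ p m hm (Ideal.Quotient.mk _ b) = Ideal.Quotient.mk _ b :=
    Ideal.Quotient.factor_mk (aux_le p m hm) b
  rw [hφ]
  constructor
  · intro hu h0
    have : IsUnit ((Ideal.Quotient.mk (Ideal.span ({p} : Set B))) b) := by
      have := hu.map (auxφ p m hm)
      rwa [hφ] at this
    rw [h0] at this
    exact this.ne_zero rfl
  · intro h0
    have hpb : ¬ p ∣ b := by
      intro hdvd
      exact h0 (Ideal.Quotient.eq_zero_iff_mem.mpr (Ideal.mem_span_singleton.mpr hdvd))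
    have hco : IsCoprime (p ^ m) b := (hp.coprime_iff_not_dvd.mpr hpb).pow_left
    obtain ⟨u, v, huv⟩ := hco
    refine isUnit_iff_exists_inv.mpr ⟨Ideal.Quotient.mk _ v, ?_⟩
    have : (Ideal.Quotient.mk (Ideal.span {p ^ m})) (u * p ^ m + v * b) = 1 := by
      rw [huv]; simp
    have hpm : (Ideal.Quotient.mk (Ideal.span {p ^ m})) (p ^ m) = 0 :=
      Ideal.Quotient.eq_zero_iff_mem.mpr (Ideal.mem_span_singleton.mpr dvd_rfl)
    rw [map_add, map_mul, map_mul, hpm, mul_zero, zero_add] at this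
    rw [mul_comm]; exact this

lemma aux_decomp (hp : Prime p) (hm : 2 ≤ m) (n : ℕ)
    (f : MvPolynomial (Fin n) (B ⧸ Ideal.span {p ^ m})) (hf : f ≠ 0) :
    ∃ (c : B ⧸ Ideal.span {p ^ m})
      (fred : MvPolynomial (Fin n) (B ⧸ Ideal.span {p ^ m})),
      f = C c * fred ∧ (∃ d, IsUnit (MvPolynomial.coeff d fred)) := by
  haveI : IsPrincipalIdealRing (B ⧸ Ideal.span {p ^ m}) :=
    IsPrincipalIdealRing.of_surjective _ Ideal.Quotient.mk_surjective
  set R := B ⧸ Ideal.span {p ^ m}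
  set v : f.support → R := fun d => MvPolynomial.coeff d.1 f with hv
  set J : Ideal R := Ideal.span (Set.range v) with hJ
  obtain ⟨c, hcgen⟩ := (IsPrincipalIdealRing.principal J).principal
  have hmem : ∀ d, MvPolynomial.coeff d f ∈ J := by
    intro d
    by_cases hd : d ∈ f.support
    · exact Ideal.subset_span ⟨⟨d, hd⟩, rfl⟩
    · rw [MvPolynomial.notMem_support_iff.mp hd]
      exact J.zero_mem
  have hb : ∀ d, ∃ a, a * c = MvPolynomial.coeff d f := by
    intro d
    have := hmem d
    rw [hcgen, Submodule.mem_span_singleton] at this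
    simpa [smul_eq_mul] using this
  choose b hbspec using hb
  set fred : MvPolynomial (Fin n) R :=
    ∑ d ∈ f.support, MvPolynomial.monomial d (b d) with hfred
  have hcoeff : ∀ d, MvPolynomial.coeff d fred = if d ∈ f.support then b d else 0 := by
    intro d
    rw [hfred, MvPolynomial.coeff_sum]
    simp only [MvPolynomial.coeff_monomial]
    rw [Finset.sum_ite_eq' f.support d b]
  have heq : f = C c * fred := by
    apply MvPolynomial.ext
    intro d
    rw [MvPolynomial.coeff_C_mul, hcoeff d]
    by_cases hd : d ∈ f.support
    · rw [if_pos hd, mul_comm, hbspec]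
    · rw [if_neg hd, mul_zero, MvPolynomial.notMem_support_iff.mp hd]
  refine ⟨c, fred, heq, ?_⟩
  by_contra hno
  push_neg at hno
  have hbzero : ∀ d ∈ f.support, auxφ p m hm (b d) = 0 := by
    intro d hd
    have := hno d
    rw [hcoeff d, if_pos hd] at this
    by_contra h
    exact this ((aux_unit_iff p m hp hm _).mpr h)
  -- express c as a combination of the coefficients
  have hcJ : c ∈ J := by
    rw [hcgen, Ideal.submodule_span_eq]
    exact Ideal.subset_span rfl
  have hcJ' : c ∈ Submodule.span R (Set.range v) := hcJ
  obtain ⟨l, hl⟩ := Finsupp.mem_span_range_iff_exists_finsupp.mp hcJ' 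
  set t : R := l.sum fun d a => a * b d.1 with ht
  have hct : t * c = c := by
    calc t * c = l.sum (fun d a => a * (b d.1 * c)) := by
          rw [ht, Finsupp.sum, Finsupp.sum, Finset.sum_mul]
          exact Finset.sum_congr rfl fun d _ => mul_assoc _ _ _
      _ = l.sum (fun d a => a • v d) := by
          apply Finsupp.sum_congr
          intro d _
          rw [hbspec, hv, smul_eq_mul]
      _ = c := hl
  have hφt : auxφ p m hm t = 0 := by
    rw [ht, Finsupp.sum, map_sum]
    apply Finset.sum_eq_zero
    intro d _
    rw [map_mul, hbzero d.1 d.2, mul_zero]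
  have hunit : IsUnit (1 - t) := by
    rw [aux_unit_iff p m hp hm, map_sub, map_one, hφt, sub_zero]
    haveI : Nontrivial (B ⧸ Ideal.span ({p} : Set B)) :=
      Ideal.Quotient.nontrivial_iff.mpr (Ideal.span_singleton_ne_top hp.not_isUnit)
    exact one_ne_zero
  have hc0 : c = 0 := by
    have : (1 - t) * c = 0 := by rw [sub_mul, one_mul, hct, sub_self]
    exact (hunit.mul_right_eq_zero).mp this
  apply hf
  rw [heq, hc0, map_zero, zero_mul]

end Aux

/-- Reduction of polynomials over `R = B ⧸ p^m B` (`m ≥ 2`): every nonzero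
`f ∈ R[x₁,…,xₙ]` can be written as `f = c · f_red`, where `c ∈ R` is the (class of the)
gcd of lifts of the coefficients of `f`, and `f_red` has unit content — some coefficient
of `f_red` is a unit — and `f_red` is a nonzero divisor in `R[x₁,…,xₙ]`. -/
theorem stmt19 {B : Type*} [CommRing B] [IsDomain B] [IsPrincipalIdealRing B]
    (p : B) (hp : Prime p) (m : ℕ) (hm : 2 ≤ m) (n : ℕ)
    (f : MvPolynomial (Fin n) (B ⧸ Ideal.span {p ^ m})) (hf : f ≠ 0) :
    ∃ (c : B ⧸ Ideal.span {p ^ m})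
      (fred : MvPolynomial (Fin n) (B ⧸ Ideal.span {p ^ m})),
      f = C c * fred ∧
      (∃ d, IsUnit (MvPolynomial.coeff d fred)) ∧
      fred ∈ nonZeroDivisors (MvPolynomial (Fin n) (B ⧸ Ideal.span {p ^ m})) := by
  haveI : (Ideal.span ({p} : Set B)).IsPrime :=
    (Ideal.span_singleton_prime hp.ne_zero).mpr hp
  obtain ⟨c, fred, heq, d, hd⟩ := aux_decomp p m hp hm n f hf
  refine ⟨c, fred, heq, ⟨d, hd⟩, ?_⟩
  rw [mem_nonZeroDivisors_iff_right]
  intro g hg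
  by_contra hgne
  obtain ⟨c', g', heq', d', hd'⟩ := aux_decomp p m hp hm n g hgne
  -- map to (B/p)[x], a domain
  set Φ := MvPolynomial.map (σ := Fin n) (auxφ p m hm) with hΦ
  have himg : ∀ (h : MvPolynomial (Fin n) (B ⧸ Ideal.span {p ^ m})) (e : Fin n →₀ ℕ),
      IsUnit (MvPolynomial.coeff e h) → Φ h ≠ 0 := by
    intro h e he h0
    have : MvPolynomial.coeff e (Φ h) = 0 := by rw [h0]; simp
    rw [hΦ, MvPolynomial.coeff_map] at this
    exact ((aux_unit_iff p m hp hm _).mp he) this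
  have hmul : Φ (g' * fred) ≠ 0 := by
    rw [map_mul]
    exact mul_ne_zero (himg g' d' hd') (himg fred d hd)
  have hne : g' * fred ≠ 0 := fun h => hmul (by rw [h, map_zero])
  obtain ⟨e, he⟩ : ∃ e, MvPolynomial.coeff e (Φ (g' * fred)) ≠ 0 := by
    by_contra h
    push_neg at h
    exact hmul (MvPolynomial.ext _ _ fun e => by rw [h e, MvPolynomial.coeff_zero])
  rw [hΦ, MvPolynomial.coeff_map] at he
  have heunit : IsUnit (MvPolynomial.coeff e (g' * fred)) :=
    (aux_unit_iff p m hp hm _).mpr he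
  have hzero : C c' * (g' * fred) = 0 := by
    rw [← mul_assoc, ← heq', hg]
  have : c' * MvPolynomial.coeff e (g' * fred) = 0 := by
    rw [← MvPolynomial.coeff_C_mul, hzero, MvPolynomial.coeff_zero]
  have hc'0 : c' = 0 := by
    have := mul_eq_zero_of_left rfl (MvPolynomial.coeff e (g' * fred))
    exact (heunit.mul_left_eq_zero).mp ‹c' * MvPolynomial.coeff e (g' * fred) = 0›
  apply hgne
  rw [heq', hc'0, map_zero, zero_mul]
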